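/- Let $M_2$ denote the monoid scheme of $2\times 2$ matrices over $\mathbb{Z}$ and fix a positive integer $q$. The ring of functions on the closed subscheme $\{A \in M_2 : \det A = q\}$ invariant under conjugation by $\mathrm{SL}_2$ is the polynomial ring $\mathbb{Z}[\mathrm{tr}]$ generated by the trace function. -/

import Mathlib

set_option maxHeartbeats 1000000

open MvPolynomial

/-- The determinant as a polynomial function of the entries of a `2×2`-matrix. -/
noncomputable def detP : MvPolynomial (Fin 2 × Fin 2) ℤ :=
  X (0, 0) * X (1, 1) - X (0, 1) * X (1, 0)

/-- The trace as a polynomial function of the entries of a `2×2`-matrix. -/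
noncomputable def trP : MvPolynomial (Fin 2 × Fin 2) ℤ :=
  X (0, 0) + X (1, 1)

/-- The ideal of the fiber `M₂|_{det = q}` of the monoid of `2×2`-matrices. -/
noncomputable def fiberIdeal (q : ℕ) : Ideal (MvPolynomial (Fin 2 × Fin 2) ℤ) :=
  Ideal.span {detP - C (q : ℤ)}

/-- `f` is, as a function on the scheme `M₂|_{det=q}`, invariant under conjugation by
`SL₂`: for every commutative ring `S`, every `g ∈ SL₂(S)` and every `2×2`-matrix `m`
over `S` with `det m = q`, `f(g m g⁻¹) = f(m)`. -/
def IsConjInvariant (q : ℕ) (f : MvPolynomial (Fin 2 × Fin 2) ℤ) : Prop :=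
  ∀ (S : Type) (_ : CommRing S) (g : Matrix.SpecialLinearGroup (Fin 2) S)
    (m : Matrix (Fin 2) (Fin 2) S), m.det = (q : S) →
      MvPolynomial.aeval
        (fun pq : Fin 2 × Fin 2 =>
          ((g : Matrix (Fin 2) (Fin 2) S) * m * ((g⁻¹ : Matrix.SpecialLinearGroup (Fin 2) S) :
            Matrix (Fin 2) (Fin 2) S)) pq.1 pq.2) f
      = MvPolynomial.aeval (fun pq : Fin 2 × Fin 2 => m pq.1 pq.2) f

noncomputable section
abbrev P3 := MvPolynomial (Fin 3) ℤ
abbrev Q4 := MvPolynomial (Fin 2 × Fin 2) ℤ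
def eIdx : (Fin 2 × Fin 2) ≃ Fin 4 where
  toFun := fun p => ![![1, 0], ![2, 3]] p.1 p.2
  invFun := ![(0,1), (0,0), (1,0), (1,1)]
  left_inv := by decide
  right_inv := by decide
def Φ : Q4 ≃ₐ[ℤ] Polynomial P3 :=
  (renameEquiv ℤ eIdx).trans (finSuccEquiv ℤ 3)
def a3 : P3 := X 0
def c3 : P3 := X 1
def d3 : P3 := X 2
lemma Φ_b : Φ (X (0,1)) = Polynomial.X := by
  simp [Φ, eIdx, finSuccEquiv_X_zero]
lemma Φ_a : Φ (X (0,0)) = Polynomial.C a3 := by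
  simp [Φ, eIdx, a3]
  rw [show ((1 : Fin 4)) = (0 : Fin 3).succ from rfl, finSuccEquiv_X_succ]
lemma Φ_c : Φ (X (1,0)) = Polynomial.C c3 := by
  simp [Φ, eIdx, c3]
  rw [show ((2 : Fin 4)) = (1 : Fin 3).succ from rfl, finSuccEquiv_X_succ]
lemma Φ_d : Φ (X (1,1)) = Polynomial.C d3 := by
  simp [Φ, eIdx, d3]
  rw [show ((3 : Fin 4)) = (2 : Fin 3).succ from rfl, finSuccEquiv_X_succ]
def D1 (q : ℕ) : Polynomial P3 :=
  Polynomial.C (a3 * d3 - C (q:ℤ)) - Polynomial.C c3 * Polynomial.X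
lemma Φ_C (q : ℕ) : Φ (C (q:ℤ)) = Polynomial.C (C (q:ℤ)) := by
  have h := map_intCast (Φ : Q4 →+* Polynomial P3) (q:ℤ)
  simpa [MvPolynomial.C_eq_coe_nat] using h
lemma Φ_D (q : ℕ) : Φ (detP - C (q:ℤ)) = D1 q := by
  rw [detP, map_sub, map_sub, map_mul, map_mul, Φ_a, Φ_b, Φ_c, Φ_d, Φ_C, D1]
  rw [← Polynomial.C_mul, map_sub]
  ring

lemma c3_prime : Prime c3 := by
  let sw : Fin 3 ≃ Fin 3 := Equiv.swap 0 1
  let Ψ : P3 ≃ₐ[ℤ] Polynomial (MvPolynomial (Fin 2) ℤ) :=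
    (renameEquiv ℤ sw).trans (finSuccEquiv ℤ 2)
  have h : Ψ c3 = Polynomial.X := by
    simp [Ψ, c3, sw, finSuccEquiv_X_zero]
  have := (MulEquiv.prime_iff Ψ.toMulEquiv (p := c3)).symm
  rw [this]
  show Prime (Ψ c3)
  rw [h]
  exact Polynomial.prime_X

lemma ad_ne (q : ℕ) : a3 * d3 - C (q:ℤ) ≠ 0 := by
  intro h
  have := congrArg (eval (fun i => if i = 0 then ((q:ℤ)+1) else 1)) h
  simp [a3, d3] at this

lemma c3_not_dvd (q : ℕ) : ¬ c3 ∣ (a3 * d3 - C (q:ℤ)) := by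
  rintro ⟨t, ht⟩
  have h2 := congrArg (aeval (fun i : Fin 3 => if i = 1 then (0 : P3) else X i)) ht
  simp [a3, c3, d3] at h2
  exact ad_ne q (by rw [a3, d3]; exact_mod_cast h2)

lemma D1_eq (q : ℕ) : D1 q = Polynomial.C (-c3) * Polynomial.X
    + Polynomial.C (a3 * d3 - C (q:ℤ)) := by
  rw [D1]; rw [map_neg]; ring

lemma D1_natDegree (q : ℕ) : (D1 q).natDegree = 1 := by
  rw [D1_eq]
  exact Polynomial.natDegree_linear (by simpa using c3_prime.ne_zero)

lemma D1_ne (q : ℕ) : D1 q ≠ 0 := by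
  intro h
  have := D1_natDegree q
  rw [h] at this
  simp at this

lemma D1_coeff1 (q : ℕ) : (D1 q).coeff 1 = -c3 := by
  rw [D1_eq]; simp

lemma D1_prime (q : ℕ) : Prime (D1 q) := by
  rw [← UniqueFactorizationMonoid.irreducible_iff_prime]
  constructor
  · intro h
    have := Polynomial.natDegree_eq_zero_of_isUnit h
    rw [D1_natDegree] at this; omega
  · intro u v huv
    have hu0 : u ≠ 0 := by rintro rfl; exact D1_ne q (by simp [huv])
    have hv0 : v ≠ 0 := by rintro rfl; exact D1_ne q (by simp [huv])
    have hdeg : u.natDegree + v.natDegree = 1 := by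
      rw [← Polynomial.natDegree_mul hu0 hv0, ← huv, D1_natDegree]
    -- helper: a degree-0 factor is a unit
    have key : ∀ w z : Polynomial P3, D1 q = w * z → w.natDegree = 0 → IsUnit w := by
      intro w z hwz hw
      obtain ⟨w0, rfl⟩ := Polynomial.natDegree_eq_zero.mp hw
      have hdvd1 : w0 ∣ c3 := by
        have : (D1 q).coeff 1 = w0 * z.coeff 1 := by
          rw [hwz, Polynomial.coeff_C_mul]
        rw [D1_coeff1] at this
        exact ⟨-(z.coeff 1), by linear_combination -this⟩
      have hdvd0 : w0 ∣ (a3 * d3 - C (q:ℤ)) := by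
        have : (D1 q).coeff 0 = w0 * z.coeff 0 := by
          rw [hwz, Polynomial.coeff_C_mul]
        rw [D1_eq] at this
        simp at this
        exact ⟨z.coeff 0, this⟩
      by_contra hwu
      obtain ⟨r, hr⟩ := hdvd1
      have hru : IsUnit r := (c3_prime.irreducible.isUnit_or_isUnit hr).resolve_left
        (by simpa [Polynomial.isUnit_C] using hwu)
      have hcd : c3 ∣ w0 := by
        obtain ⟨ru, hru'⟩ := hru
        refine ⟨(↑ru⁻¹ : _), ?_⟩
        rw [hr, ← hru']
        rw [mul_assoc]
        simp [← hru']
      exact c3_not_dvd q (hcd.trans hdvd0)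
    rcases Nat.add_eq_one_iff.mp hdeg with ⟨h, _⟩ | ⟨_, h⟩
    · exact Or.inl (key u v huv h)
    · exact Or.inr (key v u (by rw [huv]; ring) h)

set_option maxHeartbeats 1000000 in
abbrev Rloc : Type := Localization.Away c3
def ι3 : P3 →+* Rloc := algebraMap P3 Rloc
def cinv : Rloc := IsLocalization.Away.invSelf c3

lemma c3_mul_cinv : ι3 c3 * cinv = 1 := IsLocalization.Away.mul_invSelf c3

lemma ι3_inj : Function.Injective ι3 :=
  IsLocalization.injective Rloc
    (powers_le_nonZeroDivisors_of_noZeroDivisors c3_prime.ne_zero)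

def βq (q : ℕ) : Rloc := ι3 (a3 * d3 - C (q:ℤ)) * cinv

lemma c3_mul_βq (q : ℕ) : ι3 c3 * βq q = ι3 (a3 * d3 - C (q:ℤ)) := by
  rw [βq, ← mul_assoc, mul_comm (ι3 c3), mul_assoc, c3_mul_cinv, mul_one]

def Eq' (q : ℕ) : Polynomial P3 →+* Rloc := Polynomial.eval₂RingHom ι3 (βq q)

lemma map_D1 (q : ℕ) : (D1 q).map ι3 =
    Polynomial.C (ι3 c3) * (Polynomial.C (βq q) - Polynomial.X) := by
  rw [D1, Polynomial.map_sub, Polynomial.map_mul, Polynomial.map_C, Polynomial.map_C,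
    Polynomial.map_X, ← c3_mul_βq, Polynomial.C_mul]
  ring

lemma E_ker (q : ℕ) (F : Polynomial P3) (hF : Eq' q F = 0) : D1 q ∣ F := by
  have hroot : (F.map ι3).IsRoot (βq q) := by
    rw [Polynomial.IsRoot, Polynomial.eval_map]; exact hF
  obtain ⟨G, hG⟩ := (Polynomial.dvd_iff_isRoot).mpr hroot
  obtain ⟨b, hb⟩ := IsLocalization.integerNormalization_map_to_map
    (Submonoid.powers c3) (S := Rloc) G
  rw [show (algebraMap P3 Rloc) = ι3 from rfl] at hb
  set N := IsLocalization.integerNormalization (Submonoid.powers c3) G with hN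
  have hsmul : ((b : P3) • G) = Polynomial.C (ι3 (b : P3)) * G := by
    rw [Algebra.smul_def]
    congr 1
  have key : Polynomial.C ((b : P3) * c3) * F = (-(D1 q)) * N := by
    apply Polynomial.map_injective ι3 ι3_inj
    rw [Polynomial.map_mul, Polynomial.map_mul, Polynomial.map_neg, map_D1,
      Polynomial.map_C, hb, hsmul, hG, map_mul]
    simp only [map_mul, Polynomial.C_mul]
    ring
  have hdvd : D1 q ∣ Polynomial.C ((b : P3) * c3) * F := ⟨-N, by rw [key]; ring⟩
  obtain ⟨n, hn⟩ := b.2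
  have hn' : c3 ^ n = (b : P3) := hn
  have hCc : ¬ D1 q ∣ Polynomial.C c3 := by
    rintro ⟨t, ht⟩
    have ht0 : t ≠ 0 := by
      rintro rfl
      rw [mul_zero] at ht
      exact c3_prime.ne_zero (by simpa using ht)
    have := congrArg Polynomial.natDegree ht
    rw [Polynomial.natDegree_C, Polynomial.natDegree_mul (D1_ne q) ht0,
      D1_natDegree] at this
    omega
  rcases (D1_prime q).dvd_mul.mp hdvd with h | h
  · exfalso
    apply hCc
    apply (D1_prime q).dvd_of_dvd_pow (n := n + 1)
    rw [pow_succ, ← Polynomial.C_pow, ← Polynomial.C_mul, hn']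
    exact h
  · exact h


def MU (q : ℕ) : Matrix (Fin 2) (Fin 2) Rloc := !![ι3 a3, βq q; ι3 c3, ι3 d3]

lemma aeval_MU (q : ℕ) (g : Q4) :
    aeval (fun pq : Fin 2 × Fin 2 => MU q pq.1 pq.2) g = Eq' q (Φ g) := by
  have h : ((aeval (fun pq : Fin 2 × Fin 2 => MU q pq.1 pq.2) : Q4 →ₐ[ℤ] Rloc) : Q4 →+* Rloc)
      = (Eq' q).comp (↑(Φ : Q4 ≃ₐ[ℤ] Polynomial P3) : Q4 →+* Polynomial P3) := by
    apply MvPolynomial.ringHom_ext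
    · intro r
      have : (C r : Q4) = (r : Q4) := by norm_cast
      simp [this, map_intCast]
    · rintro ⟨i, j⟩
      fin_cases i <;> fin_cases j <;>
        simp [MU, Eq', ← Prod.mk_zero_zero, ← Prod.mk_one_one, Φ_a, Φ_b, Φ_c, Φ_d]
  exact RingHom.congr_fun h g

lemma det_MU (q : ℕ) : (MU q).det = ((q : ℕ) : Rloc) := by
  rw [MU, Matrix.det_fin_two_of]
  have := c3_mul_βq q
  have h2 : ι3 (a3 * d3) - ι3 (a3 * d3 - C (q:ℤ)) = ι3 (C (q:ℤ)) := by
    rw [← map_sub]; ring_nf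
  calc ι3 a3 * ι3 d3 - βq q * ι3 c3
      = ι3 (a3 * d3) - ι3 c3 * βq q := by rw [map_mul]; ring
    _ = ι3 (C (q:ℤ)) := by rw [c3_mul_βq, h2]
    _ = ((q : ℕ) : Rloc) := by push_cast [map_intCast]; simp

instance : IsDomain Rloc :=
  IsLocalization.isDomain_of_le_nonZeroDivisors Rloc
    (powers_le_nonZeroDivisors_of_noZeroDivisors c3_prime.ne_zero)

def polc : Polynomial Rloc := Polynomial.X ^ 2 - Polynomial.C (ι3 c3)
abbrev Rad : Type := AdjoinRoot polc
def ιR : Rloc →+* Rad := algebraMap Rloc Rad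

lemma polc_monic : polc.Monic := Polynomial.monic_X_pow_sub_C _ (by norm_num)

lemma ιR_inj : Function.Injective ιR := by
  intro x y h
  have h0 : ιR (x - y) = 0 := by rw [map_sub, h, sub_self]
  by_contra hne
  have hz : AdjoinRoot.mk polc (Polynomial.C (x - y)) = 0 := by
    rw [AdjoinRoot.mk_C]
    exact h0
  rw [AdjoinRoot.mk_eq_zero] at hz
  exact polc_monic.not_dvd_of_natDegree_lt
    (Polynomial.C_ne_zero.mpr (sub_ne_zero.mpr hne))
    (by rw [show (polc : Polynomial Rloc) = Polynomial.X ^ 2 - Polynomial.C (ι3 c3) from rfl,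
        Polynomial.natDegree_X_pow_sub_C]; simp) hz

def vv : Rad := AdjoinRoot.root polc

lemma hv2 : vv * vv = ιR (ι3 c3) := by
  have h : Polynomial.eval₂ (AdjoinRoot.of polc) vv
      (Polynomial.X ^ 2 - Polynomial.C (ι3 c3)) = 0 := AdjoinRoot.eval₂_root polc
  simp only [Polynomial.eval₂_sub, Polynomial.eval₂_pow, Polynomial.eval₂_X,
    Polynomial.eval₂_C, sub_eq_zero] at h
  rw [← sq, h]
  rfl

def vinv : Rad := vv * ιR cinv

lemma hvv : vv * vinv = 1 := by
  rw [vinv, ← mul_assoc, hv2, ← map_mul, c3_mul_cinv, map_one]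

lemma hvc : vinv * ιR (ι3 c3) = vv := by
  rw [vinv, mul_assoc, ← map_mul, mul_comm cinv, c3_mul_cinv, map_one, mul_one]

def gmat (q : ℕ) : Matrix (Fin 2) (Fin 2) Rad :=
  !![vv, -(ιR (ι3 a3)) * vinv; 0, vinv]

lemma det_gmat (q : ℕ) : (gmat q).det = 1 := by
  rw [gmat, Matrix.det_fin_two_of]
  simp [hvv]

def gSL (q : ℕ) : Matrix.SpecialLinearGroup (Fin 2) Rad := ⟨gmat q, det_gmat q⟩

lemma MU_map (q : ℕ) : (MU q).map ιR
    = !![ιR (ι3 a3), ιR (βq q); ιR (ι3 c3), ιR (ι3 d3)] := by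
  ext i j
  fin_cases i <;> fin_cases j <;> simp [MU, Matrix.map_apply]

lemma AD_sub (q : ℕ) : ιR (ι3 a3) * ιR (ι3 d3) - ιR (ι3 (a3 * d3 - C (q:ℤ))) = ((q:ℕ) : Rad) := by
  rw [← map_mul, ← map_mul, ← map_sub, ← map_sub,
    show a3 * d3 - (a3 * d3 - C (q:ℤ)) = C (q:ℤ) by ring,
    show (C (q:ℤ) : P3) = ((q:ℤ) : P3) by norm_cast, map_intCast, map_intCast]
  push_cast
  rfl

lemma conj_MU (q : ℕ) :
    gmat q * ((MU q).map ιR) * !![vinv, ιR (ι3 a3) * vinv; 0, vv]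
      = !![0, -((q:ℕ) : Rad); 1, ιR (ι3 a3) + ιR (ι3 d3)] := by
  rw [MU_map, gmat, Matrix.mul_fin_two, Matrix.mul_fin_two]
  ext i j
  have h4 : ιR (ι3 c3) * ιR (βq q) = ιR (ι3 (a3 * d3 - C (q:ℤ))) := by
    rw [← map_mul, c3_mul_βq]
  have h5 := AD_sub q
  fin_cases i <;> fin_cases j <;> simp
  · linear_combination (-(ιR (ι3 a3) * vinv)) * hvc
  · linear_combination (-(ιR (ι3 a3) ^ 2 * vinv)) * hvc + (ιR (βq q)) * hv2 + h4
      - (ιR (ι3 a3) * ιR (ι3 d3)) * hvv - h5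
  · linear_combination vinv * hvc + hvv
  · linear_combination (ιR (ι3 a3) * vinv) * hvc + (ιR (ι3 a3)) * hvv + (ιR (ι3 d3)) * hvv

def evZ {S : Type} [CommRing S] (g : Fin 2 × Fin 2 → S) : Q4 →+* S :=
  eval₂Hom (Int.castRingHom S) g

def pevZ {S : Type} [CommRing S] (t : S) : Polynomial ℤ →+* S :=
  Polynomial.eval₂RingHom (Int.castRingHom S) t

lemma aeval_evZ {S : Type} [CommRing S] {alg : Algebra ℤ S} (g : Fin 2 × Fin 2 → S) (f : Q4) :
    @aeval ℤ S _ _ _ alg g f = evZ g f := by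
  letI := alg
  have h : algebraMap ℤ S = Int.castRingHom S := Subsingleton.elim _ _
  rw [aeval_def, h]
  rfl

lemma paeval_evZ {S : Type} [CommRing S] {alg : Algebra ℤ S} (t : S) (p : Polynomial ℤ) :
    @Polynomial.aeval ℤ S _ _ alg t p = pevZ t p := by
  letI := alg
  have h : algebraMap ℤ S = Int.castRingHom S := Subsingleton.elim _ _
  rw [Polynomial.aeval_def, h]
  rfl

lemma evZ_natural {S T : Type} [CommRing S] [CommRing T] (χ : S →+* T)
    (g : Fin 2 × Fin 2 → S) (f : Q4) :
    χ (evZ g f) = evZ (fun i => χ (g i)) f := by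
  show χ (eval₂ (Int.castRingHom S) g f) = _
  rw [MvPolynomial.eval₂_comp_left χ]
  have h : χ.comp (Int.castRingHom S) = Int.castRingHom T := Subsingleton.elim _ _
  rw [h]
  rfl

lemma pevZ_natural {S T : Type} [CommRing S] [CommRing T] (χ : S →+* T)
    (t : S) (p : Polynomial ℤ) :
    χ (pevZ t p) = pevZ (χ t) p := by
  show χ (Polynomial.eval₂ (Int.castRingHom S) t p) = _
  rw [Polynomial.hom_eval₂]
  have h : χ.comp (Int.castRingHom S) = Int.castRingHom T := Subsingleton.elim _ _
  rw [h]
  rfl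

lemma evZ_paeval {S : Type} [CommRing S] (g : Fin 2 × Fin 2 → S)
    (w : Q4) (p : Polynomial ℤ) :
    evZ g (Polynomial.aeval w p) = pevZ (evZ g w) p := by
  rw [paeval_evZ w p, pevZ_natural (evZ g) w p]

def compM {S : Type} [CommRing S] (q : ℕ) (t : S) : Matrix (Fin 2) (Fin 2) S :=
  !![0, -(q:S); 1, t]

noncomputable def pf (q : ℕ) (f : Q4) : Polynomial ℤ :=
  aeval (fun pq : Fin 2 × Fin 2 => compM q (Polynomial.X : Polynomial ℤ) pq.1 pq.2) f

lemma aeval_compM {S : Type} [CommRing S] (q : ℕ) (t : S) (f : Q4) :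
    evZ (fun pq : Fin 2 × Fin 2 => compM q t pq.1 pq.2) f
      = pevZ t (pf q f) := by
  rw [pf, aeval_evZ (S := Polynomial ℤ), evZ_natural (pevZ t)]
  have he : (fun i : Fin 2 × Fin 2 => (pevZ t) (compM q Polynomial.X i.1 i.2))
      = fun pq : Fin 2 × Fin 2 => compM q t pq.1 pq.2 := by
    funext pq
    obtain ⟨i, j⟩ := pq
    fin_cases i <;> fin_cases j <;> simp [compM, pevZ]
  rw [he]
lemma evZ_MU (q : ℕ) (g : Q4) : evZ (fun pq : Fin 2 × Fin 2 => MU q pq.1 pq.2) g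
    = Eq' q (Φ g) := by
  rw [← aeval_evZ, aeval_MU]

lemma forward (q : ℕ) (f : Q4)
    (hinv : ∀ (S : Type) (_ : CommRing S) (g : Matrix.SpecialLinearGroup (Fin 2) S)
      (m : Matrix (Fin 2) (Fin 2) S), m.det = (q : S) →
        MvPolynomial.aeval
          (fun pq : Fin 2 × Fin 2 =>
            ((g : Matrix (Fin 2) (Fin 2) S) * m * ((g⁻¹ : Matrix.SpecialLinearGroup (Fin 2) S) :
              Matrix (Fin 2) (Fin 2) S)) pq.1 pq.2) f
        = MvPolynomial.aeval (fun pq : Fin 2 × Fin 2 => m pq.1 pq.2) f) :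
    (detP - C (q:ℤ)) ∣ (f - Polynomial.aeval trP (pf q f)) := by
  have hdet : ((MU q).map ιR).det = ((q:ℕ) : Rad) := by
    rw [show (MU q).map ιR = ιR.mapMatrix (MU q) from rfl, ← RingHom.map_det, det_MU,
      map_natCast]
  have h := hinv Rad inferInstance (gSL q) ((MU q).map ιR) hdet
  rw [aeval_evZ, aeval_evZ] at h
  have hginv : (((gSL q)⁻¹ : Matrix.SpecialLinearGroup (Fin 2) Rad) : Matrix (Fin 2) (Fin 2) Rad)
      = !![vinv, ιR (ι3 a3) * vinv; 0, vv] := by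
    rw [Matrix.SpecialLinearGroup.coe_inv]
    show Matrix.adjugate (gmat q) = _
    rw [gmat, Matrix.adjugate_fin_two_of]
    norm_num
  have hg : ((gSL q : Matrix.SpecialLinearGroup (Fin 2) Rad) : Matrix (Fin 2) (Fin 2) Rad)
      = gmat q := rfl
  rw [hg, hginv, conj_MU q] at h
  have hL : evZ (fun pq : Fin 2 × Fin 2 =>
        (!![0, -((q:ℕ) : Rad); 1, ιR (ι3 a3) + ιR (ι3 d3)]) pq.1 pq.2) f
      = pevZ (ιR (ι3 a3) + ιR (ι3 d3)) (pf q f) :=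
    aeval_compM q (ιR (ι3 a3) + ιR (ι3 d3)) f
  have hR : evZ (fun pq : Fin 2 × Fin 2 => ((MU q).map ιR) pq.1 pq.2) f
      = ιR (evZ (fun pq : Fin 2 × Fin 2 => MU q pq.1 pq.2) f) := by
    rw [evZ_natural ιR]
    rfl
  rw [hL, hR] at h
  have h2 : pevZ (ιR (ι3 a3) + ιR (ι3 d3)) (pf q f)
      = ιR (pevZ (ι3 a3 + ι3 d3) (pf q f)) := by
    rw [pevZ_natural ιR, map_add]
  rw [h2] at h
  have h3 : evZ (fun pq : Fin 2 × Fin 2 => MU q pq.1 pq.2) f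
      = pevZ (ι3 a3 + ι3 d3) (pf q f) := ιR_inj h.symm
  have htr : evZ (fun pq : Fin 2 × Fin 2 => MU q pq.1 pq.2) trP = ι3 a3 + ι3 d3 := by
    simp [evZ, trP, ← Prod.mk_zero_zero, ← Prod.mk_one_one, MU]
  have h4 : evZ (fun pq : Fin 2 × Fin 2 => MU q pq.1 pq.2)
      (f - Polynomial.aeval trP (pf q f)) = 0 := by
    rw [map_sub, h3, evZ_paeval, htr, sub_self]
  rw [evZ_MU] at h4
  have h5 := E_ker q _ h4
  rw [← Φ_D q] at h5
  have h6 := map_dvd Φ.symm h5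
  simpa using h6

lemma evZ_trP {S : Type} [CommRing S] (N : Matrix (Fin 2) (Fin 2) S) :
    evZ (fun pq : Fin 2 × Fin 2 => N pq.1 pq.2) trP = N.trace := by
  rw [Matrix.trace_fin_two]
  simp [evZ, trP, ← Prod.mk_zero_zero, ← Prod.mk_one_one]

lemma evZ_detP {S : Type} [CommRing S] (N : Matrix (Fin 2) (Fin 2) S) :
    evZ (fun pq : Fin 2 × Fin 2 => N pq.1 pq.2) detP = N.det := by
  rw [Matrix.det_fin_two]
  simp [evZ, detP, ← Prod.mk_zero_zero, ← Prod.mk_one_one]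

lemma evZ_Cq {S : Type} [CommRing S] (q : ℕ) (e : Fin 2 × Fin 2 → S) :
    evZ e (C (q:ℤ)) = (q : S) := by
  simp [evZ]

lemma backward (q : ℕ) (f : Q4) (p : Polynomial ℤ)
    (hdvd : (detP - C (q:ℤ)) ∣ (f - Polynomial.aeval trP p))
    (S : Type) (iS : CommRing S) (g : Matrix.SpecialLinearGroup (Fin 2) S)
    (m : Matrix (Fin 2) (Fin 2) S) (hdet : m.det = (q : S)) :
    MvPolynomial.aeval
        (fun pq : Fin 2 × Fin 2 =>
          ((g : Matrix (Fin 2) (Fin 2) S) * m * ((g⁻¹ : Matrix.SpecialLinearGroup (Fin 2) S) :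
            Matrix (Fin 2) (Fin 2) S)) pq.1 pq.2) f
      = MvPolynomial.aeval (fun pq : Fin 2 × Fin 2 => m pq.1 pq.2) f := by
  obtain ⟨h₁, hh⟩ := hdvd
  have hf : f = Polynomial.aeval trP p + (detP - C (q:ℤ)) * h₁ := by
    linear_combination hh
  rw [aeval_evZ, aeval_evZ, hf]
  simp only [map_add, map_mul, map_sub]
  rw [evZ_paeval, evZ_paeval, evZ_trP, evZ_trP, evZ_detP, evZ_detP, evZ_Cq, evZ_Cq, hdet]
  have hdet2 : ((g : Matrix (Fin 2) (Fin 2) S) * m *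
      ((g⁻¹ : Matrix.SpecialLinearGroup (Fin 2) S) : Matrix (Fin 2) (Fin 2) S)).det = (q : S) := by
    rw [Matrix.det_mul, Matrix.det_mul, g.prop, (g⁻¹).prop, hdet]
    ring
  have htr : ((g : Matrix (Fin 2) (Fin 2) S) * m *
      ((g⁻¹ : Matrix.SpecialLinearGroup (Fin 2) S) : Matrix (Fin 2) (Fin 2) S)).trace
      = m.trace := by
    rw [Matrix.trace_mul_cycle]
    have hmul : ((g⁻¹ : Matrix.SpecialLinearGroup (Fin 2) S) : Matrix (Fin 2) (Fin 2) S) *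
        (g : Matrix (Fin 2) (Fin 2) S) = 1 := by
      rw [← Matrix.SpecialLinearGroup.coe_mul, inv_mul_cancel g,
        Matrix.SpecialLinearGroup.coe_one]
    rw [hmul, one_mul]
  rw [hdet2, htr]
  ring

lemma inj_tr (q : ℕ) (p : Polynomial ℤ)
    (h : (detP - C (q:ℤ)) ∣ Polynomial.aeval trP p) : p = 0 := by
  obtain ⟨t, ht⟩ := h
  have h2 := congrArg
    (evZ (fun pq : Fin 2 × Fin 2 => compM q (Polynomial.X : Polynomial ℤ) pq.1 pq.2)) ht
  rw [evZ_paeval, map_mul, map_sub, evZ_detP, evZ_trP, evZ_Cq] at h2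
  have hd : (compM q (Polynomial.X : Polynomial ℤ)).det = ((q:ℕ) : Polynomial ℤ) := by
    rw [compM, Matrix.det_fin_two_of]
    ring
  have htr2 : (compM q (Polynomial.X : Polynomial ℤ)).trace = Polynomial.X := by
    rw [compM, Matrix.trace_fin_two]
    simp
  rw [hd, htr2, sub_self, zero_mul] at h2
  rw [← paeval_evZ, Polynomial.aeval_X_left_apply] at h2
  exact h2

theorem stmt_6 (q : ℕ) (hq : 0 < q) :
    (∀ f : MvPolynomial (Fin 2 × Fin 2) ℤ,
      IsConjInvariant q f ↔
        ∃ p : Polynomial ℤ, f - Polynomial.aeval trP p ∈ fiberIdeal q) ∧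
    (∀ p : Polynomial ℤ, Polynomial.aeval trP p ∈ fiberIdeal q → p = 0) := by
  constructor
  · intro f
    constructor
    · intro hf
      exact ⟨pf q f, Ideal.mem_span_singleton.mpr (forward q f hf)⟩
    · rintro ⟨p, hp⟩
      intro S iS g m hdet
      exact backward q f p (Ideal.mem_span_singleton.mp hp) S iS g m hdet
  · intro p hp
    exact inj_tr q p (Ideal.mem_span_singleton.mp hp)

end
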